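/- Let q be a prime power, let G ∈ F_q^{k×n} be a matrix of rank k, let s_1, s_2 ≥ 1 with s_1 + s_2 = k, and let s* be an integer with max(s_1,s_2) ≤ s* ≤ k−1. Define A_i(s*) = Σ_{s=s_i}^{s*} n/(n−s) for i ∈ {1,2} and B(s*) = n·H_n − Σ_{s=s*+1}^{n−1} n/(n−s). Then E_1(G)/A_1(s*) + E_2(G)/A_2(s*) ≥ B(s*)/A_1(s*) + B(s*)/A_2(s*) − 1. -/

import Mathlib

open Finset

/-- The `r`-th harmonic number `H_r = ∑_{i=1}^r 1/i`, as a real number (`H_0 = 0`). -/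
noncomputable def harm (r : ℕ) : ℝ := ∑ i ∈ Finset.range r, (1 : ℝ) / (i + 1)

/-- The span of the columns of `G` indexed by the subset `S ⊆ {1,…,n}`. -/
noncomputable def colSpan (F : Type*) [Field F] {k n : ℕ}
    (G : Matrix (Fin k) (Fin n) F) (S : Finset (Fin n)) : Submodule F (Fin k → F) :=
  Submodule.span F ((fun j => fun i => G i j) '' (S : Set (Fin n)))

/-- `α_V(s)`: the number of `s`-element subsets `S ⊆ {1,…,n}` whose columns span a
subspace containing the target subspace `V`. -/
noncomputable def alphaCount (F : Type*) [Field F] {k n : ℕ}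
    (G : Matrix (Fin k) (Fin n) F) (V : Submodule F (Fin k → F)) (s : ℕ) : ℕ :=
  Nat.card {S : Finset (Fin n) // S.card = s ∧ V ≤ colSpan F G S}

/-- The first file subspace `F₁ = span(e_1, …, e_{s₁}) ⊆ F_q^k`. -/
noncomputable def file1 (F : Type*) [Field F] (k s1 : ℕ) : Submodule F (Fin k → F) :=
  Submodule.span F {v : Fin k → F | ∃ i : Fin k, (i : ℕ) < s1 ∧ v = Pi.single i 1}

/-- The second file subspace `F₂ = span(e_{s₁+1}, …, e_k) ⊆ F_q^k`. -/
noncomputable def file2 (F : Type*) [Field F] (k s1 : ℕ) : Submodule F (Fin k → F) :=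
  Submodule.span F {v : Fin k → F | ∃ i : Fin k, s1 ≤ (i : ℕ) ∧ v = Pi.single i 1}

/-- The expected retrieval time `E(G, V) = n·H_n − ∑_{s=1}^{n−1} α_V(s)/C(n−1,s)`. -/
noncomputable def Etime (F : Type*) [Field F] {k n : ℕ}
    (G : Matrix (Fin k) (Fin n) F) (V : Submodule F (Fin k → F)) : ℝ :=
  (n : ℝ) * harm n -
    ∑ s ∈ Finset.Icc 1 (n - 1), (alphaCount F G V s : ℝ) / ((n - 1).choose s : ℝ)

/-- `A_i(s*) = ∑_{s=s_i}^{s*} n/(n−s)`. -/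
noncomputable def Acut (n si sstar : ℕ) : ℝ :=
  ∑ s ∈ Finset.Icc si sstar, (n : ℝ) / ((n : ℝ) - s)

/-- `B(s*) = n·H_n − ∑_{s=s*+1}^{n−1} n/(n−s)`. -/
noncomputable def Bcut (n sstar : ℕ) : ℝ :=
  (n : ℝ) * harm n - ∑ s ∈ Finset.Icc (sstar + 1) (n - 1), (n : ℝ) / ((n : ℝ) - s)

section Aux
variable {F : Type*} [Field F] {k n : ℕ} (G : Matrix (Fin k) (Fin n) F)
  (V : Submodule F (Fin k → F))

lemma alpha_eq (s : ℕ)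
    [DecidablePred fun S : Finset (Fin n) => S.card = s ∧ V ≤ colSpan F G S] :
    alphaCount F G V s
      = (Finset.univ.filter
          (fun S : Finset (Fin n) => S.card = s ∧ V ≤ colSpan F G S)).card := by
  classical
  rw [alphaCount, Nat.card_eq_fintype_card]
  convert Fintype.card_subtype _ using 2

lemma colSpan_mono {S T : Finset (Fin n)} (h : S ⊆ T) : colSpan F G S ≤ colSpan F G T :=
  Submodule.span_mono (Set.image_mono (Finset.coe_subset.mpr h))

lemma finrank_colSpan_le (S : Finset (Fin n)) :
    Module.finrank F (colSpan F G S) ≤ S.card := by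
  classical
  have h : colSpan F G S
      = Submodule.span F ((S.image (fun j => fun i => G i j) : Finset (Fin k → F)) : Set _) := by
    rw [Finset.coe_image]; rfl
  rw [h]
  exact le_trans (finrank_span_finset_le_card _) Finset.card_image_le

lemma alpha_le_choose (s : ℕ) : alphaCount F G V s ≤ n.choose s := by
  classical
  rw [alpha_eq]
  have h : (Finset.univ.filter
      (fun S : Finset (Fin n) => S.card = s ∧ V ≤ colSpan F G S))
      ⊆ Finset.powersetCard s (Finset.univ : Finset (Fin n)) := by
    intro S hS
    rw [Finset.mem_filter] at hS
    exact Finset.mem_powersetCard.mpr ⟨Finset.subset_univ _, hS.2.1⟩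
  calc _ ≤ (Finset.powersetCard s (Finset.univ : Finset (Fin n))).card := Finset.card_le_card h
    _ = n.choose s := by rw [Finset.card_powersetCard, Finset.card_univ, Fintype.card_fin]

lemma alpha_eq_zero {s : ℕ} (hs : s < Module.finrank F V) : alphaCount F G V s = 0 := by
  classical
  rw [alpha_eq, Finset.card_eq_zero, Finset.filter_eq_empty_iff]
  rintro S - ⟨hcard, hle⟩
  have h1 : Module.finrank F V ≤ Module.finrank F (colSpan F G S) :=
    Submodule.finrank_mono hle
  have h2 := finrank_colSpan_le G S
  omega

lemma alpha_step (s : ℕ) :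
    (n - s) * alphaCount F G V s ≤ (s + 1) * alphaCount F G V (s + 1) := by
  classical
  rw [alpha_eq, alpha_eq]
  set P : ℕ → Finset (Finset (Fin n)) :=
    fun t => Finset.univ.filter (fun S => S.card = t ∧ V ≤ colSpan F G S) with hP
  have key : ∑ S ∈ P s, ∑ T ∈ P (s+1), (if S ⊆ T then (1:ℕ) else 0)
           = ∑ T ∈ P (s+1), ∑ S ∈ P s, (if S ⊆ T then (1:ℕ) else 0) := Finset.sum_comm
  have hleft : ∀ S ∈ P s, ∑ T ∈ P (s+1), (if S ⊆ T then (1:ℕ) else 0) = n - s := by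
    intro S hS
    rw [Finset.mem_filter] at hS
    obtain ⟨-, hcard, hle⟩ := hS
    rw [← Finset.card_filter]
    have himg : (P (s+1)).filter (fun T => S ⊆ T)
        = (Finset.univ \ S).image (fun j => insert j S) := by
      ext T
      constructor
      · intro hT
        rw [Finset.mem_filter, Finset.mem_filter] at hT
        obtain ⟨⟨-, hTcard, -⟩, hST⟩ := hT
        have hne : ¬ (T ⊆ S) := fun hTS => by
          have := Finset.card_le_card hTS; omega
        obtain ⟨j, hjT, hjS⟩ := Finset.not_subset.mp hne
        refine Finset.mem_image.mpr ⟨j, Finset.mem_sdiff.mpr ⟨Finset.mem_univ _, hjS⟩, ?_⟩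
        apply Finset.eq_of_subset_of_card_le
        · exact Finset.insert_subset hjT hST
        · rw [Finset.card_insert_of_notMem hjS, hcard, hTcard]
      · intro hT
        obtain ⟨j, hj, rfl⟩ := Finset.mem_image.mp hT
        rw [Finset.mem_sdiff] at hj
        rw [Finset.mem_filter, Finset.mem_filter]
        refine ⟨⟨Finset.mem_univ _, ?_, le_trans hle (colSpan_mono G (Finset.subset_insert _ _))⟩,
          Finset.subset_insert _ _⟩
        rw [Finset.card_insert_of_notMem hj.2, hcard]
    have hinj : Set.InjOn (fun j => insert j S) ↑(Finset.univ \ S) := by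
      intro a ha b hb hab
      rw [Finset.mem_coe, Finset.mem_sdiff] at ha hb
      have hab' : insert a S = insert b S := hab
      have : a ∈ insert b S := hab' ▸ Finset.mem_insert_self a S
      rcases Finset.mem_insert.mp this with h | h
      · exact h
      · exact absurd h ha.2
    rw [himg, Finset.card_image_of_injOn hinj, Finset.card_sdiff_of_subset (Finset.subset_univ _),
      Finset.card_univ, Fintype.card_fin, hcard]
  have hright : ∀ T ∈ P (s+1), ∑ S ∈ P s, (if S ⊆ T then (1:ℕ) else 0) ≤ s + 1 := by
    intro T hT
    rw [Finset.mem_filter] at hT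
    obtain ⟨-, hTcard, -⟩ := hT
    rw [← Finset.card_filter]
    have hsub : (P s).filter (fun S => S ⊆ T) ⊆ Finset.powersetCard s T := by
      intro S hS
      rw [Finset.mem_filter, Finset.mem_filter] at hS
      exact Finset.mem_powersetCard.mpr ⟨hS.2, hS.1.2.1⟩
    calc _ ≤ (Finset.powersetCard s T).card := Finset.card_le_card hsub
      _ = s + 1 := by rw [Finset.card_powersetCard, hTcard, Nat.choose_succ_self_right]
  calc (n - s) * (P s).card = ∑ S ∈ P s, (n - s) := by rw [Finset.sum_const, smul_eq_mul, mul_comm]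
    _ = ∑ S ∈ P s, ∑ T ∈ P (s+1), (if S ⊆ T then (1:ℕ) else 0) :=
        Finset.sum_congr rfl (fun S hS => (hleft S hS).symm)
    _ = ∑ T ∈ P (s+1), ∑ S ∈ P s, (if S ⊆ T then (1:ℕ) else 0) := key
    _ ≤ ∑ T ∈ P (s+1), (s + 1) := Finset.sum_le_sum hright
    _ = (s + 1) * (P (s+1)).card := by rw [Finset.sum_const, smul_eq_mul, mul_comm]

lemma alpha_ratio_step {s : ℕ} (hs : s + 1 ≤ n) :
    (alphaCount F G V s : ℝ) / (n.choose s : ℝ)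
      ≤ (alphaCount F G V (s+1) : ℝ) / (n.choose (s+1) : ℝ) := by
  have h0 : 0 < n.choose s := Nat.choose_pos (le_of_lt hs)
  have h1 : 0 < n.choose (s+1) := Nat.choose_pos hs
  rw [div_le_div_iff₀ (by exact_mod_cast h0) (by exact_mod_cast h1)]
  have hnat : alphaCount F G V s * n.choose (s+1) ≤ alphaCount F G V (s+1) * n.choose s := by
    have hstep := alpha_step G V s
    have := Nat.choose_succ_right_eq n s
    have hmul : alphaCount F G V s * n.choose (s+1) * (s+1)
        ≤ alphaCount F G V (s+1) * n.choose s * (s+1) := by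
      calc alphaCount F G V s * n.choose (s+1) * (s+1)
          = alphaCount F G V s * (n.choose (s+1) * (s+1)) := by ring
        _ = alphaCount F G V s * (n.choose s * (n - s)) := by rw [this]
        _ = n.choose s * ((n - s) * alphaCount F G V s) := by ring
        _ ≤ n.choose s * ((s + 1) * alphaCount F G V (s+1)) :=
            Nat.mul_le_mul_left _ hstep
        _ = alphaCount F G V (s+1) * n.choose s * (s+1) := by ring
    exact Nat.le_of_mul_le_mul_right hmul (Nat.succ_pos s)
  exact_mod_cast hnat

lemma alpha_ratio_mono {s t : ℕ} (hst : s ≤ t) (ht : t ≤ n) :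
    (alphaCount F G V s : ℝ) / (n.choose s : ℝ)
      ≤ (alphaCount F G V t : ℝ) / (n.choose t : ℝ) := by
  induction t, hst using Nat.le_induction with
  | base => exact le_refl _
  | succ t hst ih =>
      exact le_trans (ih (le_trans (Nat.le_succ t) ht)) (alpha_ratio_step G V ht)

end Aux





section Files
variable (F : Type*) [Field F] {k s1 s2 : ℕ}

lemma single_li : LinearIndependent F (fun i : Fin k => (Pi.single i 1 : Fin k → F)) := by
  have h := (Pi.basisFun F (Fin k)).linearIndependent
  have he : ⇑(Pi.basisFun F (Fin k)) = fun i : Fin k => (Pi.single i 1 : Fin k → F) := by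
    funext i; exact Pi.basisFun_apply F (Fin k) i
  rwa [he] at h

lemma finrank_file1_ge (hk : s1 ≤ k) : s1 ≤ Module.finrank F (file1 F k s1) := by
  classical
  set f : Fin s1 → (Fin k → F) := fun j => Pi.single (Fin.castLE hk j) 1 with hf
  have hli : LinearIndependent F f :=
    (single_li F).comp (Fin.castLE hk) (Fin.castLE_injective hk)
  have hsub : Submodule.span F (Set.range f) ≤ file1 F k s1 := by
    apply Submodule.span_le.mpr
    rintro v ⟨j, rfl⟩
    exact Submodule.subset_span ⟨Fin.castLE hk j, j.isLt, rfl⟩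
  have := Submodule.finrank_mono hsub
  rwa [finrank_span_eq_card hli, Fintype.card_fin] at this

lemma finrank_file2_ge (hk : s1 + s2 = k) : s2 ≤ Module.finrank F (file2 F k s1) := by
  classical
  set g : Fin s2 → Fin k := fun j => ⟨s1 + j.1, by omega⟩ with hg
  have hginj : Function.Injective g := by
    intro a b hab
    have : s1 + a.1 = s1 + b.1 := congrArg Fin.val hab
    exact Fin.ext (by omega)
  set f : Fin s2 → (Fin k → F) := fun j => Pi.single (g j) 1 with hf
  have hli : LinearIndependent F f := (single_li F).comp g hginj
  have hsub : Submodule.span F (Set.range f) ≤ file2 F k s1 := by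
    apply Submodule.span_le.mpr
    rintro v ⟨j, rfl⟩
    exact Submodule.subset_span ⟨g j, by simp [hg], rfl⟩
  have := Submodule.finrank_mono hsub
  rwa [finrank_span_eq_card hli, Fintype.card_fin] at this

lemma file_sup_top : file1 F k s1 ⊔ file2 F k s1 = ⊤ := by
  rw [eq_top_iff, ← (Pi.basisFun F (Fin k)).span_eq]
  apply Submodule.span_le.mpr
  rintro v ⟨i, rfl⟩
  have hv : ⇑(Pi.basisFun F (Fin k)) i = (Pi.single i 1 : Fin k → F) := by
    classical exact Pi.basisFun_apply F (Fin k) i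
  rw [SetLike.mem_coe, hv]
  by_cases h : (i : ℕ) < s1
  · exact Submodule.mem_sup_left (Submodule.subset_span ⟨i, h, rfl⟩)
  · exact Submodule.mem_sup_right (Submodule.subset_span ⟨i, le_of_not_gt h, rfl⟩)

lemma alpha_files_add_le {n : ℕ} (G : Matrix (Fin k) (Fin n) F) {sstar : ℕ}
    (hst : sstar < k) :
    alphaCount F G (file1 F k s1) sstar + alphaCount F G (file2 F k s1) sstar
      ≤ n.choose sstar := by
  classical
  rw [alpha_eq, alpha_eq]
  set A := Finset.univ.filter
    (fun S : Finset (Fin n) => S.card = sstar ∧ file1 F k s1 ≤ colSpan F G S) with hA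
  set B := Finset.univ.filter
    (fun S : Finset (Fin n) => S.card = sstar ∧ file2 F k s1 ≤ colSpan F G S) with hB
  have hdisj : Disjoint A B := by
    rw [Finset.disjoint_left]
    intro S hSA hSB
    rw [hA, Finset.mem_filter] at hSA
    rw [hB, Finset.mem_filter] at hSB
    have htop : colSpan F G S = ⊤ := by
      rw [eq_top_iff, ← file_sup_top (F := F) (k := k) (s1 := s1)]
      exact sup_le hSA.2.2 hSB.2.2
    have h1 : Module.finrank F (colSpan F G S) = k := by
      rw [htop, finrank_top, Module.finrank_pi, Fintype.card_fin]
    have h2 := finrank_colSpan_le G S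
    omega
  have hsub : A ∪ B ⊆ Finset.powersetCard sstar (Finset.univ : Finset (Fin n)) := by
    intro S hS
    rcases Finset.mem_union.mp hS with h | h
    · rw [hA, Finset.mem_filter] at h
      exact Finset.mem_powersetCard.mpr ⟨Finset.subset_univ _, h.2.1⟩
    · rw [hB, Finset.mem_filter] at h
      exact Finset.mem_powersetCard.mpr ⟨Finset.subset_univ _, h.2.1⟩
  calc A.card + B.card = (A ∪ B).card := (Finset.card_union_of_disjoint hdisj).symm
    _ ≤ (Finset.powersetCard sstar (Finset.univ : Finset (Fin n))).card :=
        Finset.card_le_card hsub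
    _ = n.choose sstar := by rw [Finset.card_powersetCard, Finset.card_univ, Fintype.card_fin]

end Files









lemma div_choose_eq {n s : ℕ} (hs : s < n) (a : ℕ) :
    (a : ℝ) / (((n-1).choose s : ℕ) : ℝ)
      = ((a : ℝ) / (n.choose s : ℝ)) * ((n : ℝ) / ((n : ℝ) - s)) := by
  have h1 : 1 ≤ n := by omega
  have hid : n * ((n-1).choose s) = n.choose s * (n - s) := by
    have h := Nat.add_one_mul_choose_eq (n-1) s
    rw [Nat.sub_add_cancel h1] at h
    rw [h, Nat.choose_succ_right_eq]
  have hns : ((n : ℝ) - s) = ((n - s : ℕ) : ℝ) := by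
    rw [Nat.cast_sub hs.le]
  have hc1 : (0:ℝ) < (((n-1).choose s : ℕ) : ℝ) := by
    exact_mod_cast Nat.choose_pos (by omega)
  have hc2 : (0:ℝ) < ((n.choose s : ℕ) : ℝ) := by
    exact_mod_cast Nat.choose_pos hs.le
  have hns0 : (0:ℝ) < ((n : ℝ) - s) := by
    rw [hns]; exact_mod_cast Nat.sub_pos_of_lt hs
  have hprod : (0:ℝ) < ((n.choose s : ℕ):ℝ) * ((n - s : ℕ):ℝ) :=
    mul_pos hc2 (by exact_mod_cast Nat.sub_pos_of_lt hs)
  rw [div_mul_div_comm, hns, div_eq_div_iff hc1.ne' hprod.ne']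
  have hidR : ((n.choose s : ℕ) : ℝ) * ((n - s : ℕ) : ℝ) = (n : ℝ) * (((n-1).choose s : ℕ) : ℝ) := by
    rw [← Nat.cast_mul, ← Nat.cast_mul, ← hid]
  calc (a : ℝ) * (((n.choose s : ℕ)) * ((n - s : ℕ) : ℝ))
      = (a : ℝ) * ((n : ℝ) * (((n-1).choose s : ℕ) : ℝ)) := by rw [hidR]
    _ = (a : ℝ) * (n : ℝ) * (((n-1).choose s : ℕ) : ℝ) := by ring

lemma Acut_pos {n si sstar : ℕ} (hsis : si ≤ sstar) (hsn : sstar < n) :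
    0 < Acut n si sstar := by
  apply Finset.sum_pos
  · intro s hs
    rw [Finset.mem_Icc] at hs
    have h1 : (s : ℝ) < (n : ℝ) := by exact_mod_cast lt_of_le_of_lt hs.2 hsn
    have h2 : (0:ℝ) < (n : ℝ) := lt_of_le_of_lt (by positivity) h1
    exact div_pos h2 (by linarith)
  · exact Finset.nonempty_Icc.mpr hsis

lemma key_bound {F : Type*} [Field F] {k n : ℕ} (G : Matrix (Fin k) (Fin n) F)
    (V : Submodule F (Fin k → F)) {si sstar : ℕ}
    (hfr : si ≤ Module.finrank F V) (hsi : 1 ≤ si) (hsis : si ≤ sstar) (hsn : sstar < n) :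
    Bcut n sstar - Etime F G V
      ≤ ((alphaCount F G V sstar : ℝ) / (n.choose sstar : ℝ)) * Acut n si sstar := by
  classical
  set ρ : ℝ := (alphaCount F G V sstar : ℝ) / (n.choose sstar : ℝ) with hρ
  set w : ℕ → ℝ := fun s => (n : ℝ) / ((n : ℝ) - s) with hw
  set term : ℕ → ℝ := fun s => (alphaCount F G V s : ℝ) / ((n - 1).choose s : ℝ) with hterm
  have hwnn : ∀ s, s < n → 0 ≤ w s := by
    intro s hsn'
    have : (s:ℝ) < (n:ℝ) := by exact_mod_cast hsn'
    exact div_nonneg (by positivity) (by linarith)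
  have hhi : sstar ≤ n - 1 := by omega
  -- split the sum
  have hsplit : ∑ s ∈ Finset.Icc 1 (n-1), term s
      = (∑ s ∈ Finset.Ioc 0 sstar, term s) + ∑ s ∈ Finset.Ioc sstar (n-1), term s := by
    rw [show Finset.Icc 1 (n-1) = Finset.Ioc 0 (n-1) from Finset.Icc_add_one_left_eq_Ioc 0 (n-1)]
    exact (Finset.sum_Ioc_consecutive _ (Nat.zero_le _) hhi).symm
  -- head
  have hhead : ∑ s ∈ Finset.Ioc 0 sstar, term s ≤ ρ * Acut n si sstar := by
    have hzero : ∀ s ∈ Finset.Ioc 0 sstar, s ∉ Finset.Icc si sstar → term s = 0 := by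
      intro s hs hns'
      rw [Finset.mem_Ioc] at hs
      rw [Finset.mem_Icc] at hns'
      have hlt : s < si := by omega
      have : alphaCount F G V s = 0 := alpha_eq_zero G V (lt_of_lt_of_le hlt hfr)
      simp [hterm, this]
    have hsub : Finset.Icc si sstar ⊆ Finset.Ioc 0 sstar := by
      intro s hs
      rw [Finset.mem_Icc] at hs
      rw [Finset.mem_Ioc]
      omega
    rw [← Finset.sum_subset hsub hzero]
    rw [Acut, Finset.mul_sum]
    apply Finset.sum_le_sum
    intro s hs
    rw [Finset.mem_Icc] at hs
    have hsn' : s < n := lt_of_le_of_lt hs.2 hsn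
    simp only [hterm]
    have := div_choose_eq hsn' (alphaCount F G V s)
    rw [this]
    exact mul_le_mul_of_nonneg_right
      (alpha_ratio_mono G V hs.2 hsn.le) (hwnn s hsn')
  -- tail
  have htail : ∑ s ∈ Finset.Ioc sstar (n-1), term s
      ≤ ∑ s ∈ Finset.Ioc sstar (n-1), w s := by
    apply Finset.sum_le_sum
    intro s hs
    rw [Finset.mem_Ioc] at hs
    have hsn' : s < n := by omega
    simp only [hterm]
    have := div_choose_eq hsn' (alphaCount F G V s)
    rw [this]
    have hone : (alphaCount F G V s : ℝ) / (n.choose s : ℝ) ≤ 1 := by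
      rw [div_le_one (by exact_mod_cast Nat.choose_pos hsn'.le)]
      exact_mod_cast alpha_le_choose G V s
    calc _ ≤ 1 * w s := mul_le_mul_of_nonneg_right hone (hwnn s hsn')
      _ = w s := one_mul _
  have hT : ∑ s ∈ Finset.Icc (sstar + 1) (n-1), w s = ∑ s ∈ Finset.Ioc sstar (n-1), w s := by
    rw [Finset.Icc_add_one_left_eq_Ioc]
  rw [Bcut, Etime]
  have : ∑ s ∈ Finset.Icc 1 (n-1), term s
      ≤ ρ * Acut n si sstar + ∑ s ∈ Finset.Ioc sstar (n-1), w s := by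
    rw [hsplit]; linarith
  rw [hT]
  linarith

/-- The combinatorial cut: for `max(s₁,s₂) ≤ s* ≤ k−1`,
`E₁/A₁(s*) + E₂/A₂(s*) ≥ B(s*)/A₁(s*) + B(s*)/A₂(s*) − 1`. -/
theorem stmt4 (q k n s1 s2 : ℕ) (hq : IsPrimePow q)
    (F : Type*) [Field F] [Fintype F] (hF : Fintype.card F = q)
    (G : Matrix (Fin k) (Fin n) F) (hrank : G.rank = k)
    (hs1 : 1 ≤ s1) (hs2 : 1 ≤ s2) (hk : s1 + s2 = k)
    (sstar : ℕ) (hlo : max s1 s2 ≤ sstar) (hhi : sstar ≤ k - 1) :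
    Etime F G (file1 F k s1) / Acut n s1 sstar + Etime F G (file2 F k s1) / Acut n s2 sstar ≥
      Bcut n sstar / Acut n s1 sstar + Bcut n sstar / Acut n s2 sstar - 1 := by

  have hkn : k ≤ n := by
    have := Matrix.rank_le_width G
    omega
  have h2k : 2 ≤ k := by omega
  have hs1star : s1 ≤ sstar := le_trans (le_max_left _ _) hlo
  have hs2star : s2 ≤ sstar := le_trans (le_max_right _ _) hlo
  have hstark : sstar < k := by omega
  have hstarn : sstar < n := lt_of_lt_of_le hstark hkn
  have hA1 : 0 < Acut n s1 sstar := Acut_pos hs1star hstarn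
  have hA2 : 0 < Acut n s2 sstar := Acut_pos hs2star hstarn
  set ρ1 : ℝ := (alphaCount F G (file1 F k s1) sstar : ℝ) / (n.choose sstar : ℝ) with hρ1
  set ρ2 : ℝ := (alphaCount F G (file2 F k s1) sstar : ℝ) / (n.choose sstar : ℝ) with hρ2
  have hB1 : Bcut n sstar - Etime F G (file1 F k s1) ≤ ρ1 * Acut n s1 sstar :=
    key_bound G _ (finrank_file1_ge F (by omega)) hs1 hs1star hstarn
  have hB2 : Bcut n sstar - Etime F G (file2 F k s1) ≤ ρ2 * Acut n s2 sstar :=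
    key_bound G _ (finrank_file2_ge F hk) hs2 hs2star hstarn
  have hρsum : ρ1 + ρ2 ≤ 1 := by
    rw [hρ1, hρ2, ← add_div, div_le_one (by exact_mod_cast Nat.choose_pos hstarn.le)]
    exact_mod_cast alpha_files_add_le F G hstark
  have g1 : Bcut n sstar / Acut n s1 sstar - ρ1
      ≤ Etime F G (file1 F k s1) / Acut n s1 sstar := by
    have e1 : Bcut n sstar / Acut n s1 sstar - ρ1
        = (Bcut n sstar - ρ1 * Acut n s1 sstar) / Acut n s1 sstar := by
      field_simp
    rw [e1]
    exact div_le_div_of_nonneg_right (by linarith) hA1.le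
  have g2 : Bcut n sstar / Acut n s2 sstar - ρ2
      ≤ Etime F G (file2 F k s1) / Acut n s2 sstar := by
    have e2 : Bcut n sstar / Acut n s2 sstar - ρ2
        = (Bcut n sstar - ρ2 * Acut n s2 sstar) / Acut n s2 sstar := by
      field_simp
    rw [e2]
    exact div_le_div_of_nonneg_right (by linarith) hA2.le
  rw [ge_iff_le]
  linarith
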